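/- Let x₂, x_j, x_k, x_ℓ be mutually independent real-valued random variables on a probability space, all square-integrable, with x_k x_ℓ square-integrable and E[x_j] = E[x_k] = E[x_ℓ] = 0, and let c : ℝ → ℝ be a bounded measurable function. Let X = (1, x₂, x_j, x_k, x_ℓ, x_k·x_ℓ)ᵗ ∈ ℝ⁶, assume all entries of Σ_c = E[c(x₂) · XXᵗ] are finite, and let E₂ be the 6×5 coordinate-selection matrix whose columns are the standard basis vectors e₁, e₂, e₄, e₅, e₆ of ℝ⁶. Then E₂E₂ᵗ Σ_c E₂ = Σ_c E₂. -/

import Mathlib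

open Matrix MeasureTheory ProbabilityTheory

/-- Verification, for GLMs such as the logistic and Poisson
models, of the structural hypothesis `E₂E₂ᵗ Σ_c E₂ = Σ_c E₂` of the mixed
pairwise independence lemma: the weighted Gram matrix
`Σ_c = E[c(x₂) XXᵗ]` with bounded measurable weight `c` depending only on the
fixed covariate `x₂` satisfies the condition, where
`X = (1, x₂, x_j, x_k, x_ℓ, x_k x_ℓ)ᵗ` and `E₂` selects `e₁, e₂, e₄, e₅, e₆`. -/
theorem stmt13 {Ω : Type*} [MeasurableSpace Ω] (P : Measure Ω) [IsProbabilityMeasure P]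
    (x2 xj xk xl : Ω → ℝ)
    (hmeas2 : Measurable x2) (hmeasj : Measurable xj)
    (hmeask : Measurable xk) (hmeasl : Measurable xl)
    (hindep : iIndepFun ![x2, xj, xk, xl] P)
    (hL2 : ∀ f ∈ ({x2, xj, xk, xl} : Set (Ω → ℝ)), MemLp f 2 P)
    (hL2kl : MemLp (fun ω => xk ω * xl ω) 2 P)
    (hmeanj : ∫ ω, xj ω ∂P = 0) (hmeank : ∫ ω, xk ω ∂P = 0)
    (hmeanl : ∫ ω, xl ω ∂P = 0)
    (c : ℝ → ℝ) (hcmeas : Measurable c) (hcbdd : ∃ C, ∀ x, |c x| ≤ C)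
    (X : Ω → Fin 6 → ℝ)
    (hX : ∀ ω, X ω = ![1, x2 ω, xj ω, xk ω, xl ω, xk ω * xl ω])
    (hint : ∀ a b, Integrable (fun ω => c (x2 ω) * (X ω a * X ω b)) P)
    (Sig : Matrix (Fin 6) (Fin 6) ℝ)
    (hSig : ∀ a b, Sig a b = ∫ ω, c (x2 ω) * (X ω a * X ω b) ∂P)
    (E₂ : Matrix (Fin 6) (Fin 5) ℝ)
    (hE₂ : ∀ i j, E₂ i j = if i = ![0, 1, 3, 4, 5] j then 1 else 0) :
    E₂ * E₂ᵀ * Sig * E₂ = Sig * E₂ := by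
  set f : Fin 4 → Ω → ℝ := ![x2, xj, xk, xl] with hf
  have hfmeas : ∀ i, Measurable (f i) := by
    intro i
    fin_cases i <;> simpa [hf] using (by assumption : Measurable _)
  -- independence of xj from the triple (x2, xk, xl)
  have hbig : IndepFun (fun ω (i : ({1} : Finset (Fin 4))) => f i ω)
      (fun ω (i : ({0, 2, 3} : Finset (Fin 4))) => f i ω) P :=
    hindep.indepFun_finset {1} {0, 2, 3} (by decide) hfmeas
  have htmeas : Measurable (fun ω (i : ({0, 2, 3} : Finset (Fin 4))) => f i ω) :=
    measurable_pi_lambda _ fun i => hfmeas i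
  -- key: for any measurable φ of (x2, xk, xl), E[xj ⬝ φ] = 0
  have key : ∀ (φ : (({0, 2, 3} : Finset (Fin 4)) → ℝ) → ℝ), Measurable φ →
      ∫ ω, xj ω * φ (fun i => f i ω) ∂P = 0 := by
    intro φ hφ
    have hI : IndepFun xj (fun ω => φ (fun i => f i ω)) P := by
      have := hbig.comp (φ := fun v : ({1} : Finset (Fin 4)) → ℝ => v ⟨1, by decide⟩)
        (ψ := φ) (measurable_pi_apply _ : Measurable fun v : ({1} : Finset (Fin 4)) → ℝ => v ⟨1, by decide⟩) hφ
      exact this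
    have := hI.integral_mul_eq_mul_integral hmeasj.aestronglyMeasurable
      ((hφ.comp htmeas).aestronglyMeasurable)
    simpa [Pi.mul_apply, hmeanj] using this
  have h2 : ∀ ω, X ω 2 = xj ω := fun ω => by rw [hX]; rfl
  have hv5 : ∀ ω, (![1, x2 ω, xj ω, xk ω, xl ω, xk ω * xl ω] : Fin 6 → ℝ) 5 = xk ω * xl ω := fun ω => rfl
  have hzero : ∀ b : Fin 6, b ≠ 2 → Sig 2 b = 0 := by
    intro b hb
    rw [hSig]
    fin_cases b
    · rw [← key (fun v => c (v ⟨0, by decide⟩)) (hcmeas.comp (measurable_pi_apply _))]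
      congr 1; funext ω; simp [hX, hf, hv5]; ring
    · rw [← key (fun v => c (v ⟨0, by decide⟩) * v ⟨0, by decide⟩)
        ((hcmeas.comp (measurable_pi_apply _)).mul (measurable_pi_apply _))]
      congr 1; funext ω; simp [hX, hf, hv5]; ring
    · exact absurd rfl hb
    · rw [← key (fun v => c (v ⟨0, by decide⟩) * v ⟨2, by decide⟩)
        ((hcmeas.comp (measurable_pi_apply _)).mul (measurable_pi_apply _))]
      congr 1; funext ω; simp [hX, hf, hv5]; ring
    · rw [← key (fun v => c (v ⟨0, by decide⟩) * v ⟨3, by decide⟩)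
        ((hcmeas.comp (measurable_pi_apply _)).mul (measurable_pi_apply _))]
      congr 1; funext ω; simp [hX, hf, hv5]; ring
    · rw [← key (fun v => c (v ⟨0, by decide⟩) * (v ⟨2, by decide⟩ * v ⟨3, by decide⟩))
        (by fun_prop)]
      congr 1; funext ω; simp [hX, hf, hv5]; ring
  have hP : E₂ * E₂ᵀ = Matrix.diagonal (fun i : Fin 6 => if i = 2 then 0 else 1) := by
    ext i i'
    fin_cases i <;> fin_cases i' <;>
      simp [Matrix.mul_apply, Matrix.transpose_apply, hE₂, Fin.sum_univ_five,
        Matrix.diagonal]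
  rw [hP]
  ext a b
  rw [Matrix.mul_apply, Matrix.mul_apply]
  by_cases ha : a = 2
  · subst ha
    fin_cases b <;>
      simp [Matrix.diagonal_mul, hE₂, Fin.sum_univ_six,
        hzero 0 (by decide), hzero 1 (by decide), hzero 3 (by decide),
        hzero 4 (by decide), hzero 5 (by decide)]
  · simp [Matrix.diagonal_mul, ha]
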